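/- (Core of the lemma that the finalized chain of an honest validator grows monotonically.) Let V ⊆ V′ be sets of FFG-votes among n validators such that the set of validators violating E1 or E2 w.r.t. V′ has cardinality m with 3·m < n. If 𝒞 is finalized w.r.t. V and 𝒞′ is a greatest finalized checkpoint w.r.t. V′ (i.e., 𝒞′ is finalized w.r.t. V′ and every checkpoint finalized w.r.t. V′ is ≤ 𝒞′ in the checkpoint order), then 𝒞.chain ⪯ 𝒞′.chain. -/

import Mathlib

structure Block (β : Type) where
  body : β
  p : ℤ

def genesisBlock {β : Type} (g : β) : Block β := ⟨g, -1⟩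

structure Chain (β : Type) (g : β) where
  blocks : List (Block β)
  ne : blocks ≠ []
  head_genesis : blocks.head? = some (genesisBlock g)
  strict : List.Chain' (fun a b => a.p < b.p) blocks

namespace Chain

variable {β : Type} {g : β}

/-- The height of a chain: the slot of its last block. -/
def height (χ : Chain β g) : ℤ := (χ.blocks.getLast χ.ne).p

/-- `χ₁ ⪯ χ₂`: `χ₁` is a prefix of `χ₂`. -/
def IsPrefix (χ₁ χ₂ : Chain β g) : Prop := χ₁.blocks <+: χ₂.blocks

/-- Two chains conflict if neither is a prefix of the other. -/
def Conflicts (χ₁ χ₂ : Chain β g) : Prop := ¬ χ₁.IsPrefix χ₂ ∧ ¬ χ₂.IsPrefix χ₁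

end Chain

def genesisChain {β : Type} (g : β) : Chain β g where
  blocks := [genesisBlock g]
  ne := by simp
  head_genesis := rfl
  strict := List.isChain_singleton _

structure Checkpoint (β : Type) (g : β) where
  chain : Chain β g
  c : ℕ
  height_le : chain.height ≤ (c : ℤ)

def genesisCheckpoint {β : Type} (g : β) : Checkpoint β g where
  chain := genesisChain g
  c := 0
  height_le := by simp [Chain.height, genesisChain, genesisBlock]

namespace Checkpoint

variable {β : Type} {g : β}

/-- Lexicographic order on checkpoints: `𝒞 ≤ 𝒞′`. -/
def le (C C' : Checkpoint β g) : Prop :=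
  C.c < C'.c ∨ (C.c = C'.c ∧ C.chain.height ≤ C'.chain.height)

/-- Strict lexicographic order on checkpoints: `𝒞 < 𝒞′`. -/
def lt (C C' : Checkpoint β g) : Prop :=
  C.c < C'.c ∨ (C.c = C'.c ∧ C.chain.height < C'.chain.height)

end Checkpoint

structure FFGVote (n : ℕ) (β : Type) (g : β) where
  source : Checkpoint β g
  target : Checkpoint β g
  sender : Fin n

def FFGVote.Valid {n : ℕ} {β : Type} {g : β} (m : FFGVote n β g) : Prop :=
  m.source.chain.IsPrefix m.target.chain ∧ m.source.c < m.target.c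

/-- The set of senders of a set of votes. -/
def senders {n : ℕ} {β : Type} {g : β} (M : Set (FFGVote n β g)) : Set (Fin n) :=
  {v | ∃ m ∈ M, m.sender = v}

/-- A checkpoint is justified w.r.t. a set of votes `V`. -/
inductive Justified {n : ℕ} {β : Type} {g : β} (V : Set (FFGVote n β g)) :
    Checkpoint β g → Prop
  | genesis : Justified V (genesisCheckpoint g)
  | step (C : Checkpoint β g) (M : Set (FFGVote n β g))
      (hMV : M ⊆ V)
      (hcard : 2 * n ≤ 3 * (senders M).ncard)
      (hjust : ∀ m ∈ M, Justified V m.source)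
      (hvotes : ∀ m ∈ M, m.Valid ∧
        m.source.chain.IsPrefix C.chain ∧ C.chain.IsPrefix m.target.chain ∧
        m.target.c = C.c) :
      Justified V C

/-- A checkpoint is finalized w.r.t. a set of votes `V`. -/
def Finalized {n : ℕ} {β : Type} {g : β} (V : Set (FFGVote n β g))
    (C : Checkpoint β g) : Prop :=
  C = genesisCheckpoint g ∨
    (Justified V C ∧ ∃ M ⊆ V, 2 * n ≤ 3 * (senders M).ncard ∧
      ∀ m ∈ M, m.Valid ∧ m.source = C ∧ m.target.c = C.c + 1)

/-- E1 (double voting). -/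
def ViolatesE1 {n : ℕ} {β : Type} {g : β} (V : Set (FFGVote n β g)) (v : Fin n) : Prop :=
  ∃ m₁ ∈ V, ∃ m₂ ∈ V, m₁.sender = v ∧ m₂.sender = v ∧ m₁ ≠ m₂ ∧
    m₁.target.c = m₂.target.c

/-- E2 (surround voting). -/
def ViolatesE2 {n : ℕ} {β : Type} {g : β} (V : Set (FFGVote n β g)) (v : Fin n) : Prop :=
  ∃ m₁ ∈ V, ∃ m₂ ∈ V, m₁.sender = v ∧ m₂.sender = v ∧
    m₂.source.lt m₁.source ∧ m₁.target.c < m₂.target.c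

structure Ack (n : ℕ) (β : Type) (g : β) where
  cp : Checkpoint β g
  sender : Fin n

/-- E3 (ack surround). -/
def ViolatesE3 {n : ℕ} {β : Type} {g : β} (V : Set (FFGVote n β g))
    (A : Set (Ack n β g)) (v : Fin n) : Prop :=
  ∃ m ∈ V, ∃ a ∈ A, m.sender = v ∧ a.sender = v ∧
    m.source.lt a.cp ∧ a.cp.c < m.target.c

/-- Finalized with acknowledgments. -/
def FinalizedWithAcks {n : ℕ} {β : Type} {g : β} (V : Set (FFGVote n β g))
    (A : Set (Ack n β g)) (C : Checkpoint β g) : Prop :=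
  Finalized V C ∨
    (Justified V C ∧ 2 * n ≤ 3 * (Set.ncard {v : Fin n | (⟨C, v⟩ : Ack n β g) ∈ A}))

section Aux


variable {n : ℕ} {β : Type} {g : β}

lemma genesis_prefix' (χ : Chain β g) : (genesisChain g).IsPrefix χ := by
  obtain ⟨blocks, ne, hg, hs⟩ := χ
  cases blocks with
  | nil => simp at ne
  | cons a t =>
    simp only [List.head?] at hg
    injection hg with hg
    exact ⟨t, by simp [genesisChain, hg]⟩

lemma height_lt_of_prefix' {χ₁ χ₂ : Chain β g} (h : χ₁.IsPrefix χ₂)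
    (hne : χ₁.blocks ≠ χ₂.blocks) : χ₁.height < χ₂.height := by
  haveI : IsTrans (Block β) (fun a b => a.p < b.p) := ⟨fun a b c h1 h2 => h1.trans h2⟩
  have hpw : χ₂.blocks.Pairwise (fun a b => a.p < b.p) :=
    List.isChain_iff_pairwise.mp χ₂.strict
  obtain ⟨t, ht⟩ := h
  have htne : t ≠ [] := by rintro rfl; simp at ht; exact hne ht
  rw [← ht] at hpw
  have hrel := (List.pairwise_append.mp hpw).2.2
  have key : ∀ (l₁ l₂ : List (Block β)) (h₁ : l₁ ≠ []) (h₂ : l₂ ≠ []),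
      l₁ = l₂ → l₁.getLast h₁ = l₂.getLast h₂ := by
    rintro l₁ l₂ h₁ h₂ rfl; rfl
  unfold Chain.height
  rw [key χ₂.blocks (χ₁.blocks ++ t) χ₂.ne (by simp [htne]) ht.symm]
  rw [List.getLast_append]
  rw [dif_neg (by simp [htne] : ¬ t.isEmpty = true)]
  exact hrel _ (List.getLast_mem χ₁.ne) _ (List.getLast_mem htne)

lemma eq_blocks_of_prefix_of_height_le {χ₁ χ₂ : Chain β g} (h : χ₁.IsPrefix χ₂)
    (hh : χ₂.height ≤ χ₁.height) : χ₁.blocks = χ₂.blocks := by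
  by_contra hne
  exact absurd hh (not_le.mpr (height_lt_of_prefix' h hne))

lemma justified_mono' {V V' : Set (FFGVote n β g)} (h : V ⊆ V') {C : Checkpoint β g}
    (hj : Justified V C) : Justified V' C := by
  induction hj with
  | genesis => exact .genesis
  | step C M hMV hcard hjust hvotes ih =>
    exact .step C M (hMV.trans h) hcard (fun m hm => ih m hm) hvotes

lemma finalized_mono' {V V' : Set (FFGVote n β g)} (h : V ⊆ V') {C : Checkpoint β g}
    (hf : Finalized V C) : Finalized V' C := by
  rcases hf with hg | ⟨hj, M, hMV, hcard, hM⟩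
  · exact Or.inl hg
  · exact Or.inr ⟨justified_mono' h hj, M, hMV.trans h, hcard, hM⟩

lemma exists_honest' {S₁ S₂ B : Set (Fin n)} (h₁ : 2 * n ≤ 3 * S₁.ncard)
    (h₂ : 2 * n ≤ 3 * S₂.ncard) (hB : 3 * B.ncard < n) :
    ∃ v, v ∈ S₁ ∧ v ∈ S₂ ∧ v ∉ B := by
  have hU : (S₁ ∪ S₂).ncard ≤ n := by
    have := Set.ncard_le_ncard (Set.subset_univ (S₁ ∪ S₂)) Set.finite_univ
    simpa [Set.ncard_univ] using this
  have hIU : (S₁ ∩ S₂).ncard + (S₁ ∪ S₂).ncard = S₁.ncard + S₂.ncard :=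
    Set.ncard_inter_add_ncard_union _ _ (Set.toFinite _) (Set.toFinite _)
  have hlt : B.ncard < (S₁ ∩ S₂).ncard := by omega
  obtain ⟨v, hv, hvB⟩ := Set.exists_mem_notMem_of_ncard_lt_ncard hlt (Set.toFinite _)
  exact ⟨v, hv.1, hv.2, hvB⟩

lemma justified_comparable'
    {V' : Set (FFGVote n β g)}
    (hslash : 3 * Set.ncard {v : Fin n | ViolatesE1 V' v ∨ ViolatesE2 V' v} < n)
    {C₁ C₂ : Checkpoint β g} (h₁ : Justified V' C₁) (h₂ : Justified V' C₂)
    (hc : C₁.c = C₂.c) :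
    C₁.chain.IsPrefix C₂.chain ∨ C₂.chain.IsPrefix C₁.chain := by
  cases h₁ with
  | genesis => exact Or.inl (genesis_prefix' _)
  | step _ M₁ hM₁ hcard₁ _ hv₁ =>
    cases h₂ with
    | genesis => exact Or.inr (genesis_prefix' _)
    | step _ M₂ hM₂ hcard₂ _ hv₂ =>
      obtain ⟨v, hvs₁, hvs₂, hB⟩ := exists_honest' hcard₁ hcard₂ hslash
      obtain ⟨m₁, hm₁, hsnd₁⟩ := hvs₁
      obtain ⟨m₂, hm₂, hsnd₂⟩ := hvs₂
      have heq : m₁ = m₂ := by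
        by_contra hne
        exact hB (Or.inl ⟨m₁, hM₁ hm₁, m₂, hM₂ hm₂, hsnd₁, hsnd₂, hne, by
          rw [(hv₁ m₁ hm₁).2.2.2, (hv₂ m₂ hm₂).2.2.2, hc]⟩)
      have p₁ := (hv₁ m₁ hm₁).2.2.1
      have p₂ := (hv₂ m₂ hm₂).2.2.1
      rw [heq] at p₁
      exact List.prefix_or_prefix_of_prefix p₁ p₂

lemma justified_c_zero' (hn : 0 < n) {V' : Set (FFGVote n β g)} {C : Checkpoint β g}
    (hj : Justified V' C) (hc : C.c = 0) : C = genesisCheckpoint g := by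
  cases hj with
  | genesis => rfl
  | step _ M hMV hcard hjust hvotes =>
    exfalso
    have hne : (senders M).Nonempty := by
      rw [Set.nonempty_iff_ne_empty]
      intro h
      rw [h, Set.ncard_empty] at hcard
      omega
    obtain ⟨v, m, hm, -⟩ := hne
    have h1 := (hvotes m hm).1.2
    have h2 := (hvotes m hm).2.2.2
    omega

lemma prefix_of_justified_gt'
    {V' : Set (FFGVote n β g)}
    (hslash : 3 * Set.ncard {v : Fin n | ViolatesE1 V' v ∨ ViolatesE2 V' v} < n)
    {C : Checkpoint β g} (hCj : Justified V' C)
    {M₀ : Set (FFGVote n β g)} (hM₀V : M₀ ⊆ V')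
    (hcard₀ : 2 * n ≤ 3 * (senders M₀).ncard)
    (hM₀ : ∀ m ∈ M₀, m.Valid ∧ m.source = C ∧ m.target.c = C.c + 1)
    {D : Checkpoint β g} (hD : Justified V' D) (hc : C.c < D.c) :
    C.chain.IsPrefix D.chain := by
  induction hD with
  | genesis => simp [genesisCheckpoint] at hc
  | step D M' hM'V hcard' hjust' hvotes' ih =>
    obtain ⟨v, hvs₀, hvs', hB⟩ := exists_honest' hcard₀ hcard' hslash
    obtain ⟨m₀, hm₀, hsnd₀⟩ := hvs₀
    obtain ⟨m, hm, hsnd⟩ := hvs'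
    obtain ⟨hm₀valid, hm₀src, hm₀tc⟩ := hM₀ m₀ hm₀
    obtain ⟨hmvalid, hmsrcpre, hDpre, hmtc⟩ := hvotes' m hm
    rcases eq_or_lt_of_le (Nat.succ_le_of_lt hc) with hDc | hDc
    · -- D.c = C.c + 1
      have heq : m₀ = m := by
        by_contra hne
        exact hB (Or.inl ⟨m₀, hM₀V hm₀, m, hM'V hm, hsnd₀, hsnd, hne, by omega⟩)
      rw [heq] at hm₀src
      rw [← hm₀src]
      exact hmsrcpre
    · -- C.c + 1 < D.c
      rcases lt_trichotomy m.source.c C.c with hsc | hsc | hsc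
      · exact absurd (Or.inr ⟨m₀, hM₀V hm₀, m, hM'V hm, hsnd₀, hsnd,
          Or.inl (by rw [hm₀src]; exact hsc), by omega⟩) hB
      · -- equal slots
        have hht : ¬ m.source.chain.height < C.chain.height := by
          intro hlt
          exact hB (Or.inr ⟨m₀, hM₀V hm₀, m, hM'V hm, hsnd₀, hsnd,
            Or.inr ⟨by rw [hm₀src]; exact hsc, by rw [hm₀src]; exact hlt⟩, by omega⟩)
        rcases justified_comparable' hslash hCj (hjust' m hm) hsc.symm with hp | hp
        · exact hp.trans hmsrcpre
        · have hbe : m.source.chain.blocks = C.chain.blocks :=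
            eq_blocks_of_prefix_of_height_le hp (not_lt.mp hht)
          have : C.chain.IsPrefix m.source.chain := by
            unfold Chain.IsPrefix
            rw [hbe]
          exact this.trans hmsrcpre
      · exact (ih m hm hsc).trans hmsrcpre

end Aux

/-- core of the monotone growth of the finalized chain. -/
theorem finalized_chain_grows
    {n : ℕ} {β : Type} {g : β} (V V' : Set (FFGVote n β g)) (hsub : V ⊆ V')
    (hslash : 3 * Set.ncard {v : Fin n | ViolatesE1 V' v ∨ ViolatesE2 V' v} < n)
    (C C' : Checkpoint β g)
    (hC : Finalized V C)
    (hC' : Finalized V' C')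
    (hgreatest : ∀ D : Checkpoint β g, Finalized V' D → D.le C') :
    C.chain.IsPrefix C'.chain := by
  have hn : 0 < n := by omega
  have hCV' : Finalized V' C := finalized_mono' hsub hC
  by_cases hCg : C = genesisCheckpoint g
  · subst hCg
    exact genesis_prefix' _
  have hle : C.le C' := hgreatest C hCV'
  obtain ⟨hCj, M₀, hM₀V, hcard₀, hM₀⟩ := hCV'.resolve_left hCg
  rcases hC' with hC'g | ⟨hC'j, -⟩
  · subst hC'g
    rcases hle with h | ⟨h, -⟩
    · simp [genesisCheckpoint] at h
    · exact absurd (justified_c_zero' hn hCj (by simpa [genesisCheckpoint] using h)) hCg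
  rcases hle with h | ⟨h, hht⟩
  · exact prefix_of_justified_gt' hslash hCj hM₀V hcard₀ hM₀ hC'j h
  · rcases justified_comparable' hslash hCj hC'j h with hp | hp
    · exact hp
    · have hbe : C'.chain.blocks = C.chain.blocks :=
        eq_blocks_of_prefix_of_height_le hp hht
      unfold Chain.IsPrefix
      rw [hbe]
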